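/- Let E be a finite set of edges with positive integer length function l. Then every DP-system on a metric graph assembled from E has finite stabilization time, the set of stabilization times over all DP-systems on metric graphs assembled from E is finite, and consequently there exists a DP-system attaining the maximal (longest) stabilization time, i.e., LSTDP(E) is nonempty. -/

import Mathlib

/-!
Common framework: metric multigraphs assembled from an edge set `E`
(`ends : E → Sym2 V` with distinct endpoints), walks, dynamic-point
systems, stabilization times, and structural graph notions.
-/

/-- Walks in a multigraph on vertices `V` with edge set `E` and endpoint map `ends`:
an alternating sequence of vertices and edges. -/
inductive MGWalk {E V : Type} (ends : E → Sym2 V) : V → V → Type where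
  | nil (a : V) : MGWalk ends a a
  | cons {a b c : V} (e : E) (h : ends e = s(a, b)) (tail : MGWalk ends b c) :
      MGWalk ends a c

namespace MGWalk

variable {E V : Type} {ends : E → Sym2 V}

/-- Length of a walk with respect to an edge-length function. -/
def length (l : E → ℝ) : ∀ {a b : V}, MGWalk ends a b → ℝ
  | _, _, nil _ => 0
  | _, _, cons e _ tail => l e + tail.length l

/-- The list of edge entries of a walk. -/
def edges : ∀ {a b : V}, MGWalk ends a b → List E
  | _, _, nil _ => []
  | _, _, cons e _ tail => e :: tail.edges

end MGWalk

/-- A DP-system on a metric graph assembled from `E`: the vertex set is finite,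
no edge is a loop, the multigraph is connected, and the set of initial vertices
is nonempty. -/
def IsDPSystem {E V : Type} (ends : E → Sym2 V) (S : Set V) : Prop :=
  Finite V ∧ (∀ e, ¬ (ends e).IsDiag) ∧ (∀ a b : V, Nonempty (MGWalk ends a b)) ∧
    S.Nonempty

/-- A dynamic point is present at time `t` at distance `s` from endpoint `x` of
edge `e` (on the arc leaving `x`) iff some walk from an initial vertex to `x`
has length `t - s`. -/
def IsPoint {E V : Type} (ends : E → Sym2 V) (l : E → ℝ) (S : Set V)
    (t : ℝ) (e : E) (x : V) (s : ℝ) : Prop :=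
  x ∈ ends e ∧ 0 ≤ s ∧ s < l e ∧
    ∃ v₀ ∈ S, ∃ w : MGWalk ends v₀ x, w.length l = t - s

/-- Number of dynamic points on edge `e` at time `t`. -/
noncomputable def NptsEdge {E V : Type} (ends : E → Sym2 V) (l : E → ℝ)
    (S : Set V) (e : E) (t : ℝ) : ℕ :=
  Set.ncard {p : V × ℝ | IsPoint ends l S t e p.1 p.2}

/-- Total number of dynamic points at time `t`. -/
noncomputable def Npts {E V : Type} (ends : E → Sym2 V) (l : E → ℝ)
    (S : Set V) (t : ℝ) : ℕ :=
  Set.ncard {p : E × V × ℝ | IsPoint ends l S t p.1 p.2.1 p.2.2}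

/-- `T` is a stabilization bound: `T ≥ 0` and the total number of points is
constant from `T` on. -/
def IsStabBound {E V : Type} (ends : E → Sym2 V) (l : E → ℝ) (S : Set V)
    (T : ℝ) : Prop :=
  0 ≤ T ∧ ∀ t ≥ T, Npts ends l S t = Npts ends l S T

/-- The stabilization time: the least stabilization bound. -/
noncomputable def stabTime {E V : Type} (ends : E → Sym2 V) (l : E → ℝ)
    (S : Set V) : ℝ :=
  sInf {T : ℝ | IsStabBound ends l S T}

/-- `T` is a stabilization bound for edge `e`. -/
def IsEdgeStabBound {E V : Type} (ends : E → Sym2 V) (l : E → ℝ) (S : Set V)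
    (e : E) (T : ℝ) : Prop :=
  0 ≤ T ∧ ∀ t ≥ T, NptsEdge ends l S e t = NptsEdge ends l S e T

/-- The stabilization time of edge `e`. -/
noncomputable def edgeStabTime {E V : Type} (ends : E → Sym2 V) (l : E → ℝ)
    (S : Set V) (e : E) : ℝ :=
  sInf {T : ℝ | IsEdgeStabBound ends l S e T}

/-- Membership in `LSTDP(E)` (given the underlying system is a DP-system):
its stabilization time is maximal among all DP-systems assembled from `E`. -/
def IsMaxStab {E : Type} (l : E → ℝ) {V : Type} (ends : E → Sym2 V)
    (S : Set V) : Prop :=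
  ∀ (V' : Type) (ends' : E → Sym2 V') (S' : Set V'),
    IsDPSystem ends' S' → stabTime ends' l S' ≤ stabTime ends l S

/-- Degree of vertex `x` in the subgraph with edge set `C`. -/
noncomputable def edgeDegree {E V : Type} (ends : E → Sym2 V) (C : Set E)
    (x : V) : ℕ :=
  Set.ncard {e ∈ C | x ∈ ends e}

/-- Degree of vertex `x` in the whole graph. -/
noncomputable def degree {E V : Type} (ends : E → Sym2 V) (x : V) : ℕ :=
  Set.ncard {e : E | x ∈ ends e}

/-- `x` is a vertex of the subgraph with edge set `C`. -/
def OnEdgeSet {E V : Type} (ends : E → Sym2 V) (C : Set E) (x : V) : Prop :=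
  ∃ e ∈ C, x ∈ ends e

/-- The subgraph with edge set `C` is connected. -/
def EdgeSetConn {E V : Type} (ends : E → Sym2 V) (C : Set E) : Prop :=
  ∀ a b : V, OnEdgeSet ends C a → OnEdgeSet ends C b →
    ∃ w : MGWalk ends a b, ∀ e ∈ w.edges, e ∈ C

/-- `C` is the edge set of a cycle: nonempty, connected, and every vertex of its
support has degree exactly two in it. -/
def IsCycleSet {E V : Type} (ends : E → Sym2 V) (C : Set E) : Prop :=
  C.Nonempty ∧ EdgeSetConn ends C ∧
    ∀ x : V, OnEdgeSet ends C x → edgeDegree ends C x = 2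

/-- A bead graph: no vertex lies on two distinct cycles. -/
def IsBead {E V : Type} (ends : E → Sym2 V) : Prop :=
  ∀ C₁ C₂ : Set E, IsCycleSet ends C₁ → IsCycleSet ends C₂ → C₁ ≠ C₂ →
    ∀ x : V, ¬ (OnEdgeSet ends C₁ x ∧ OnEdgeSet ends C₂ x)

/-- The graph has no cycles. -/
def IsAcyclicG {E V : Type} (ends : E → Sym2 V) : Prop :=
  ∀ C : Set E, ¬ IsCycleSet ends C

/-- `H` is the edge set of a path subgraph: nonempty, connected, acyclic, and
all degrees within `H` are at most two. -/
def IsPathSet {E V : Type} (ends : E → Sym2 V) (H : Set E) : Prop :=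
  H.Nonempty ∧ EdgeSetConn ends H ∧ (∀ C ⊆ H, ¬ IsCycleSet ends C) ∧
    ∀ x : V, edgeDegree ends H x ≤ 2

/-- `x` is a terminal vertex of the path subgraph `H`. -/
def IsHandleTerminal {E V : Type} (ends : E → Sym2 V) (H : Set E) (x : V) : Prop :=
  edgeDegree ends H x = 1

/-- The type `W(v, e)` of walks from `v` to an endpoint of edge `e`. -/
def WalkTo {E V : Type} (ends : E → Sym2 V) (v : V) (e : E) : Type :=
  { p : Σ x : V, MGWalk ends v x // p.1 ∈ ends e }

/-- The relation `≈` on `W(v, e)`: walks with the same final endpoint are related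
iff their lengths are congruent modulo `2·l(e)`; walks with different final
endpoints are related iff the difference of their lengths is congruent to
`l(e)` modulo `2·l(e)`. -/
def wapprox {E V : Type} (ends : E → Sym2 V) (l : E → ℝ) (v : V) (e : E)
    (w₁ w₂ : WalkTo ends v e) : Prop :=
  (w₁.1.1 = w₂.1.1 ∧
    ∃ k : ℤ, w₁.1.2.length l - w₂.1.2.length l = k * (2 * l e)) ∨
  (w₁.1.1 ≠ w₂.1.1 ∧
    ∃ k : ℤ, w₁.1.2.length l - w₂.1.2.length l - l e = k * (2 * l e))

namespace DP12
open MGWalk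

variable {E V V' : Type} {ends : E → Sym2 V} {ends' : E → Sym2 V'}

def wappend : ∀ {a b c : V}, MGWalk ends a b → MGWalk ends b c → MGWalk ends a c
  | _, _, _, .nil _, w => w
  | _, _, _, .cons e h t, w => .cons e h (wappend t w)

def lengthN (l : E → ℕ) : ∀ {a b : V}, MGWalk ends a b → ℕ
  | _, _, .nil _ => 0
  | _, _, .cons e _ t => l e + lengthN l t

theorem length_cast (l : E → ℕ) : ∀ {a b : V} (w : MGWalk ends a b),
    w.length (fun e => (l e : ℝ)) = (lengthN l w : ℝ)
  | _, _, .nil _ => by simp [MGWalk.length, lengthN]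
  | _, _, .cons e h t => by simp [MGWalk.length, lengthN, length_cast l t]

theorem lengthN_append (l : E → ℕ) : ∀ {a b c : V} (w₁ : MGWalk ends a b)
    (w₂ : MGWalk ends b c), lengthN l (wappend w₁ w₂) = lengthN l w₁ + lengthN l w₂
  | _, _, _, .nil _, w₂ => by simp [wappend, lengthN]
  | _, _, _, .cons e h t, w₂ => by
      simp [wappend, lengthN, lengthN_append l t w₂]; ring

def wreverse : ∀ {a b : V}, MGWalk ends a b → MGWalk ends b a
  | _, _, .nil a => .nil a
  | _, _, .cons e h t => wappend (wreverse t) (.cons e (h.trans Sym2.eq_swap) (.nil _))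

theorem lengthN_reverse (l : E → ℕ) : ∀ {a b : V} (w : MGWalk ends a b),
    lengthN l (wreverse w) = lengthN l w
  | _, _, .nil _ => rfl
  | _, _, .cons e h t => by
      simp [wreverse, lengthN, lengthN_append, lengthN_reverse l t]; ring

def mapEnds (f : V → V') (hf : ∀ e, Sym2.map f (ends e) = ends' e) :
    ∀ {a b : V}, MGWalk ends a b → MGWalk ends' (f a) (f b)
  | _, _, .nil a => .nil (f a)
  | _, _, .cons e h t => .cons e (by rw [← hf e, h, Sym2.map_pair_eq]) (mapEnds f hf t)

theorem lengthN_mapEnds (l : E → ℕ) (f : V → V') (hf : ∀ e, Sym2.map f (ends e) = ends' e) :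
    ∀ {a b : V} (w : MGWalk ends a b), lengthN l (mapEnds f hf w) = lengthN l w
  | _, _, .nil _ => rfl
  | _, _, .cons e h t => by simp [mapEnds, lengthN, lengthN_mapEnds l f hf t]

end DP12
namespace DP12

theorem nsmul_mem {A : Set ℕ} (h0 : 0 ∈ A) (hadd : ∀ a ∈ A, ∀ b ∈ A, a + b ∈ A) :
    ∀ (k : ℕ), ∀ a ∈ A, k * a ∈ A := by
  intro k
  induction k with
  | zero => intro a _; simpa using h0
  | succ n ih => intro a ha; rw [Nat.succ_mul]; exact hadd _ (ih a ha) _ ha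

/-- Structure theorem for additive submonoids of ℕ: there is a `d` dividing every
element such that all sufficiently large multiples of `d` belong to the monoid. -/
theorem semigroup_struct (A : Set ℕ) (h0 : 0 ∈ A) (hadd : ∀ a ∈ A, ∀ b ∈ A, a + b ∈ A) :
    ∃ d : ℕ, (∀ a ∈ A, d ∣ a) ∧ (∃ F : ℕ, ∀ k, F ≤ k → k * d ∈ A) := by
  classical
  set H : AddSubgroup ℤ :=
    { carrier := {z | ∃ s ∈ A, ∃ t ∈ A, z = (s : ℤ) - t}
      zero_mem' := ⟨0, h0, 0, h0, by ring⟩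
      add_mem' := by
        rintro x y ⟨s1, hs1, t1, ht1, rfl⟩ ⟨s2, hs2, t2, ht2, rfl⟩
        exact ⟨s1 + s2, hadd _ hs1 _ hs2, t1 + t2, hadd _ ht1 _ ht2, by push_cast; ring⟩
      neg_mem' := by
        rintro x ⟨s, hs, t, ht, rfl⟩
        exact ⟨t, ht, s, hs, by ring⟩ } with hHdef
  obtain ⟨g, hg⟩ := Int.subgroup_cyclic H
  have hdvd : ∀ a ∈ A, g.natAbs ∣ a := by
    intro a ha
    have : (a : ℤ) ∈ H := ⟨a, ha, 0, h0, by ring⟩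
    rw [hg, AddSubgroup.mem_closure_singleton] at this
    obtain ⟨n, hn⟩ := this
    have : g ∣ (a : ℤ) := ⟨n, by rw [← hn, zsmul_eq_mul]; push_cast; ring⟩
    exact Int.ofNat_dvd.mp ((Int.natAbs_dvd).mpr this)
  refine ⟨g.natAbs, hdvd, ?_⟩
  have hgH : g ∈ H := by
    rw [hg]; exact AddSubgroup.subset_closure rfl
  have habs : ∃ s ∈ A, ∃ t ∈ A, (g.natAbs : ℤ) = (s : ℤ) - t := by
    rcases Int.natAbs_eq g with h | h
    · obtain ⟨s, hs, t, ht, hst⟩ := hgH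
      exact ⟨s, hs, t, ht, by rw [← h]; exact hst⟩
    · obtain ⟨s, hs, t, ht, hst⟩ := (H.neg_mem hgH : -g ∈ H)
      refine ⟨s, hs, t, ht, ?_⟩
      have hh : (g.natAbs : ℤ) = -g := by conv_rhs => rw [h, neg_neg]
      rw [hh, hst]
  obtain ⟨s, hs, t, ht, hst⟩ := habs
  set d := g.natAbs with hd
  have hsd : s = t + d := by omega
  have hdt : d ∣ t := hdvd t ht
  by_cases hd0 : d = 0
  · exact ⟨0, fun k _ => by simpa [hd0] using h0⟩
  obtain ⟨τ, hτ⟩ := hdt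
  by_cases hτ0 : τ = 0
  · have ht0 : t = 0 := by rw [hτ, hτ0, Nat.mul_zero]
    have hds : d = s := by omega
    exact ⟨0, fun k _ => by rw [hds]; exact nsmul_mem h0 hadd k s hs⟩
  · refine ⟨τ * τ, fun k hk => ?_⟩
    have hτpos : 0 < τ := Nat.pos_of_ne_zero hτ0
    set i := k / τ with hi
    set j := k % τ with hj
    have hij : i * τ + j = k := by
      have h1 := Nat.div_add_mod k τ
      rw [Nat.mul_comm] at h1
      exact h1
    have hjτ : j < τ := Nat.mod_lt _ hτpos
    have hji : j ≤ i := by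
      have hτi : τ ≤ i := (Nat.le_div_iff_mul_le hτpos).mpr hk
      omega
    obtain ⟨c, hc⟩ : ∃ c, i = j + c := ⟨i - j, by omega⟩
    have key : k * d = c * t + j * s := by
      rw [← hij, hc, hsd, hτ]; ring
    rw [key]
    exact hadd _ (nsmul_mem h0 hadd _ t ht) _ (nsmul_mem h0 hadd _ s hs)

/-- Eventual periodicity: membership in `A` among numbers `≥ N` only depends on the
residue mod `d`, where all large multiples of `d` lie in `B` and `A + B ⊆ A`. -/
theorem eventual_period (A B : Set ℕ) (d : ℕ) (hd : 0 < d) (F : ℕ)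
    (hF : ∀ k, F ≤ k → k * d ∈ B) (hAB : ∀ a ∈ A, ∀ b ∈ B, a + b ∈ A) :
    ∃ N : ℕ, ∀ n m : ℕ, N ≤ n → N ≤ m → n % d = m % d → (n ∈ A ↔ m ∈ A) := by
  classical
  set N : ℕ := d * F + d + (Finset.range d).sup (fun r => sInf (A ∩ {n | n % d = r})) with hN
  have key : ∀ n m : ℕ, N ≤ m → n % d = m % d → n ∈ A → m ∈ A := by
    intro n m hm hmod hn
    set r := n % d with hr
    have hrd : r < d := Nat.mod_lt _ hd
    have hCne : (A ∩ {n' | n' % d = r}).Nonempty := ⟨n, hn, rfl⟩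
    set n₀ := sInf (A ∩ {n' | n' % d = r}) with hn₀
    have hn₀mem := Nat.sInf_mem hCne
    have hsup : n₀ ≤ (Finset.range d).sup (fun r => sInf (A ∩ {n | n % d = r})) :=
      Finset.le_sup (f := fun r => sInf (A ∩ {n | n % d = r})) (Finset.mem_range.mpr hrd)
    have hn₀m : n₀ + (d * F) + d ≤ m := by omega
    have hdvd : d ∣ m - n₀ := by
      have hme : n₀ ≡ m [MOD d] := by
        have h1 : n₀ % d = r := hn₀mem.2
        have h2 : m % d = r := by omega
        unfold Nat.ModEq; omega
      exact (Nat.modEq_iff_dvd' (by omega)).mp hme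
    obtain ⟨k, hk⟩ := hdvd
    have h2 : d * (F + 1) ≤ d * k := by rw [Nat.mul_add, Nat.mul_one]; omega
    have hkF : F + 1 ≤ k := Nat.le_of_mul_le_mul_left h2 hd
    have hmeq : m = n₀ + k * d := by rw [Nat.mul_comm k d]; omega
    rw [hmeq]
    exact hAB _ hn₀mem.1 _ (hF k (by omega))
  exact ⟨N, fun n m hn hm hmod => ⟨key n m hm hmod, key m n hn hmod.symm⟩⟩

end DP12
namespace DP12

variable {E V : Type} (ends : E → Sym2 V) (l : E → ℕ) (S : Set V)

/-- Natural lengths of walks from `S` to `x`. -/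
def Lset (x : V) : Set ℕ := {n | ∃ v₀ ∈ S, ∃ w : MGWalk ends v₀ x, lengthN l w = n}

/-- Natural lengths of closed walks at `x`. -/
def Mset (x : V) : Set ℕ := {n | ∃ w : MGWalk ends x x, lengthN l w = n}

theorem Mset_zero (x : V) : 0 ∈ Mset ends l x := ⟨.nil x, rfl⟩

theorem Mset_add (x : V) : ∀ a ∈ Mset ends l x, ∀ b ∈ Mset ends l x,
    a + b ∈ Mset ends l x := by
  rintro a ⟨w1, rfl⟩ b ⟨w2, rfl⟩
  exact ⟨wappend w1 w2, lengthN_append l w1 w2⟩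

theorem L_add_M (x : V) : ∀ n ∈ Lset ends l S x, ∀ m ∈ Mset ends l x,
    n + m ∈ Lset ends l S x := by
  rintro n ⟨v₀, hv₀, w1, rfl⟩ m ⟨w2, rfl⟩
  exact ⟨v₀, hv₀, wappend w1 w2, lengthN_append l w1 w2⟩

theorem Lstep {e : E} {x y : V} (h : ends e = s(x, y)) :
    ∀ n ∈ Lset ends l S x, n + l e ∈ Lset ends l S y := by
  rintro n ⟨v₀, hv₀, w, rfl⟩
  refine ⟨v₀, hv₀, wappend w (.cons e h (.nil y)), ?_⟩
  rw [lengthN_append]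
  simp [lengthN]

theorem M_double {x u : V} (w : MGWalk ends x u) :
    2 * lengthN l w ∈ Mset ends l x := by
  refine ⟨wappend w (wreverse w), ?_⟩
  rw [lengthN_append, lengthN_reverse]; ring

theorem M_edge {e : E} {x u : V} (hu : u ∈ ends e) (w : MGWalk ends x u) :
    2 * lengthN l w + 2 * l e ∈ Mset ends l x := by
  obtain ⟨v, hv⟩ := Sym2.mem_iff_exists.mp hu
  refine ⟨wappend w (wappend (.cons e hv (.cons e (hv.trans Sym2.eq_swap) (.nil u)))
    (wreverse w)), ?_⟩
  rw [lengthN_append, lengthN_append, lengthN_reverse]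
  simp [lengthN]; ring

/-- The main shift lemma: far enough in time, points propagate across each edge
in both directions. -/
theorem shift_lemma (hl : ∀ e, 0 < l e)
    (hconn : ∀ a b : V, Nonempty (MGWalk ends a b)) (hfin : Finite V)
    (hE : Nonempty E) :
    ∃ N : ℕ, ∀ (e : E) (x y : V), ends e = s(x, y) → ∀ n : ℕ, N ≤ n →
      (n ∈ Lset ends l S x ↔ n + l e ∈ Lset ends l S y) := by
  classical
  have := Fintype.ofFinite V
  have h1 : ∀ x : V, ∃ (d N : ℕ), (∀ e : E, d ∣ 2 * l e) ∧
      (∀ n m, N ≤ n → N ≤ m → n % d = m % d →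
        (n ∈ Lset ends l S x ↔ m ∈ Lset ends l S x)) := by
    intro x
    obtain ⟨d, hdvd, F, hF⟩ := semigroup_struct (Mset ends l x)
      (Mset_zero ends l x) (Mset_add ends l x)
    have hde : ∀ e : E, d ∣ 2 * l e := by
      intro e
      obtain ⟨w⟩ := hconn x (ends e).out.1
      have h2 := hdvd _ (M_double ends l w)
      have h3 := hdvd _ (M_edge ends l (Sym2.out_fst_mem (ends e)) w)
      exact (Nat.dvd_add_right h2).mp h3
    have hd0 : 0 < d := by
      obtain ⟨e⟩ := hE
      have := hde e
      have := hl e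
      rcases Nat.eq_zero_or_pos d with h | h
      · subst h; omega
      · exact h
    obtain ⟨N, hN⟩ := eventual_period (Lset ends l S x) (Mset ends l x) d hd0 F hF
      (L_add_M ends l S x)
    exact ⟨d, N, hde, hN⟩
  choose d N hde hper using h1
  refine ⟨Finset.univ.sup N, ?_⟩
  intro e x y he n hn
  constructor
  · exact fun h => Lstep ends l S he n h
  · intro h
    have h2 : n + l e + l e ∈ Lset ends l S x :=
      Lstep ends l S (he.trans Sym2.eq_swap) _ h
    have hNx : Finset.univ.sup N ≤ n := hn
    have hx : N x ≤ n := le_trans (Finset.le_sup (Finset.mem_univ x)) hn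
    have hmod : n % d x = (n + l e + l e) % d x := by
      obtain ⟨c, hc⟩ := hde x e
      have : n + l e + l e = n + (d x) * c := by omega
      rw [this, Nat.add_mul_mod_self_left]
    exact (hper x n (n + l e + l e) hx (by omega) hmod).mpr h2

end DP12
namespace DP12

variable {E V : Type} (ends : E → Sym2 V) (l : E → ℕ) (S : Set V)

/-- The set of dynamic points at time `t`. -/
def pts (t : ℝ) : Set (E × V × ℝ) :=
  {p | IsPoint ends (fun e => (l e : ℝ)) S t p.1 p.2.1 p.2.2}

theorem Npts_eq_pts (t : ℝ) :
    Npts ends (fun e => (l e : ℝ)) S t = (pts ends l S t).ncard := rfl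

theorem mem_pts {t : ℝ} {p : E × V × ℝ} :
    p ∈ pts ends l S t ↔ p.2.1 ∈ ends p.1 ∧ 0 ≤ p.2.2 ∧ p.2.2 < l p.1 ∧
      ∃ n ∈ Lset ends l S p.2.1, (n : ℝ) = t - p.2.2 := by
  unfold pts IsPoint Lset
  simp only [Set.mem_setOf_eq]
  constructor
  · rintro ⟨h1, h2, h3, v₀, hv, w, hw⟩
    exact ⟨h1, h2, h3, lengthN l w, ⟨v₀, hv, w, rfl⟩, by rw [← length_cast]; exact hw⟩
  · rintro ⟨h1, h2, h3, n, ⟨v₀, hv, w, hwn⟩, hn⟩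
    exact ⟨h1, h2, h3, v₀, hv, w, by rw [length_cast, hwn]; exact hn⟩

theorem window {n le : ℕ} {t t' : ℝ} (h : ⌊t⌋ = ⌊t'⌋) (h1 : 0 ≤ t - n)
    (h2 : t - n < le) : 0 ≤ t' - n ∧ t' - n < le := by
  have a1 : (n : ℤ) ≤ ⌊t⌋ := Int.le_floor.mpr (by push_cast; linarith)
  have a2 : ⌊t⌋ < (n : ℤ) + le := Int.floor_lt.mpr (by push_cast; linarith)
  rw [h] at a1 a2
  have b1 : ((n : ℤ) : ℝ) ≤ t' := Int.le_floor.mp a1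
  have b2 : t' < (((n : ℤ) + le : ℤ) : ℝ) := Int.floor_lt.mp a2
  push_cast at b1 b2
  constructor <;> linarith

theorem pts_shift (t t' : ℝ) (h : ⌊t⌋ = ⌊t'⌋) :
    pts ends l S t' = (fun p : E × V × ℝ => (p.1, p.2.1, p.2.2 + (t' - t))) ''
      pts ends l S t := by
  ext ⟨e, x, s'⟩
  simp only [Set.mem_image]
  constructor
  · intro hq
    rw [mem_pts] at hq
    obtain ⟨h1, h2, h3, n, hn, hns⟩ := hq
    have hw := window (le := l e) h.symm (by linarith) (by linarith)
    refine ⟨(e, x, s' - (t' - t)), ?_, by simp⟩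
    rw [mem_pts]
    exact ⟨h1, by simp only; linarith [hw.1], by simp only; linarith [hw.2],
      n, hn, by simp only; linarith⟩
  · rintro ⟨⟨e0, x0, s⟩, hp, heq⟩
    rw [mem_pts] at hp
    obtain ⟨h1, h2, h3, n, hn, hns⟩ := hp
    simp only [Prod.mk.injEq] at heq
    obtain ⟨he, hx, hs⟩ := heq
    subst he; subst hx
    have hw := window (le := l e0) h (by linarith) (by linarith)
    rw [mem_pts]
    exact ⟨h1, by simp only; linarith [hw.1], by simp only; linarith [hw.2],
      n, hn, by simp only; linarith⟩

theorem npts_floor {t t' : ℝ} (h : ⌊t⌋ = ⌊t'⌋) :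
    Npts ends (fun e => (l e : ℝ)) S t' = Npts ends (fun e => (l e : ℝ)) S t := by
  rw [Npts_eq_pts, Npts_eq_pts, pts_shift ends l S t t' h]
  apply Set.ncard_image_of_injective
  intro p q hpq
  simp only [Prod.mk.injEq] at hpq
  obtain ⟨h1, h2, h3⟩ := hpq
  have : p.2.2 = q.2.2 := by linarith
  exact Prod.ext h1 (Prod.ext h2 this)

end DP12
namespace DP12

variable {E V : Type} (ends : E → Sym2 V) (l : E → ℕ) (S : Set V)

open Classical in
/-- The other endpoint of `e` besides `x` (junk value if `x ∉ ends e`). -/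
noncomputable def otherV (e : E) (x : V) : V :=
  if h : ∃ y, ends e = s(x, y) then h.choose else x

theorem otherV_spec {e : E} {x y : V} (h : ends e = s(x, y)) :
    otherV ends e x = y := by
  have hex : ∃ y', ends e = s(x, y') := ⟨y, h⟩
  unfold otherV
  rw [dif_pos hex]
  exact (Sym2.congr_right.mp (h.symm.trans hex.choose_spec)).symm

/-- The sliding map realizing `pts (t+1)` as an injective image of `pts t`. -/
noncomputable def slide (p : E × V × ℝ) : E × V × ℝ :=
  if p.2.2 + 1 < l p.1 then (p.1, p.2.1, p.2.2 + 1)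
  else (p.1, otherV ends p.1 p.2.1, p.2.2 + 1 - l p.1)

theorem mem_pts' {t : ℝ} {e : E} {x : V} {s : ℝ} :
    (e, x, s) ∈ pts ends l S t ↔ x ∈ ends e ∧ 0 ≤ s ∧ s < l e ∧
      ∃ n ∈ Lset ends l S x, (n : ℝ) = t - s :=
  mem_pts ends l S

theorem slide_eq_pos {e : E} {x : V} {s : ℝ} (h : s + 1 < l e) :
    slide ends l (e, x, s) = (e, x, s + 1) := by
  unfold slide; rw [if_pos h]

theorem slide_eq_neg {e : E} {x : V} {s : ℝ} (h : ¬ (s + 1 < l e)) :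
    slide ends l (e, x, s) = (e, otherV ends e x, s + 1 - l e) := by
  unfold slide; rw [if_neg h]

theorem npts_succ [Fintype E] (hl : ∀ e, 0 < l e) (hnd : ∀ e, ¬ (ends e).IsDiag)
    (N : ℕ)
    (hshift : ∀ (e : E) (x y : V), ends e = s(x, y) → ∀ n : ℕ, N ≤ n →
      (n ∈ Lset ends l S x ↔ n + l e ∈ Lset ends l S y))
    (t : ℝ) (ht : ((N + Finset.univ.sup l : ℕ) : ℝ) ≤ t) :
    Npts ends (fun e => (l e : ℝ)) S (t + 1) = Npts ends (fun e => (l e : ℝ)) S t := by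
  have hcast : ∀ e : E, (1 : ℝ) ≤ (l e : ℝ) := fun e => by exact_mod_cast hl e
  have himg : pts ends l S (t + 1) = slide ends l '' pts ends l S t := by
    ext ⟨e, u, s'⟩
    simp only [Set.mem_image]
    constructor
    · -- find a preimage
      intro hq
      rw [mem_pts'] at hq
      obtain ⟨h1, h2, h3, n', hn', hns⟩ := hq
      by_cases hc : 1 ≤ s'
      · -- no wrap
        refine ⟨(e, u, s' - 1), ?_, ?_⟩
        · rw [mem_pts']
          exact ⟨h1, by linarith, by linarith, n', hn', by linarith⟩
        · rw [slide_eq_pos ends l (by linarith)]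
          norm_num
      · -- wrap case
        push_neg at hc
        obtain ⟨v, hv⟩ := Sym2.mem_iff_exists.mp h1
        have hvu : ends e = s(v, u) := hv.trans Sym2.eq_swap
        have hle : l e ≤ Finset.univ.sup l := Finset.le_sup (Finset.mem_univ e)
        have hn'big : N + l e < n' := by
          have hh : ((N + l e : ℕ) : ℝ) < (n' : ℝ) := by
            push_cast
            have h5 : (l e : ℝ) ≤ ((Finset.univ.sup l : ℕ) : ℝ) := by exact_mod_cast hle
            push_cast at ht
            linarith
          exact_mod_cast hh
        set n := n' - l e with hn
        have hnle : n + l e = n' := by omega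
        have hnN : N ≤ n := by omega
        have hnL : n ∈ Lset ends l S v := by
          rw [hshift e v u hvu n hnN, hnle]; exact hn'
        have hncast : (n : ℝ) = (n' : ℝ) - l e := by
          rw [← hnle]; push_cast; ring
        refine ⟨(e, v, s' + l e - 1), ?_, ?_⟩
        · rw [mem_pts']
          refine ⟨by rw [hv]; exact Sym2.mem_mk_right .., by linarith [hcast e],
            by linarith, n, hnL, by linarith⟩
        · rw [slide_eq_neg ends l (by push_neg; linarith [hcast e])]
          rw [otherV_spec ends hvu]
          simp only [Prod.mk.injEq, true_and]
          ring
    · -- forward inclusion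
      rintro ⟨⟨e0, x, s⟩, hp, heq⟩
      rw [mem_pts'] at hp
      obtain ⟨h1, h2, h3, n, hn, hns⟩ := hp
      by_cases hc : s + 1 < (l e0 : ℝ)
      · rw [slide_eq_pos ends l hc] at heq
        simp only [Prod.mk.injEq] at heq
        obtain ⟨he, hx, hs⟩ := heq
        rw [mem_pts']
        rw [← he, ← hx, ← hs]
        exact ⟨h1, by linarith, by linarith, n, hn, by linarith⟩
      · rw [slide_eq_neg ends l hc] at heq
        push_neg at hc
        simp only [Prod.mk.injEq] at heq
        obtain ⟨he, hx, hs⟩ := heq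
        obtain ⟨y, hy⟩ := Sym2.mem_iff_exists.mp h1
        have hxy : otherV ends e0 x = y := otherV_spec ends hy
        rw [mem_pts']
        rw [← he, ← hx, ← hs, hxy]
        have hyu : y ∈ ends e0 := by rw [hy]; exact Sym2.mem_mk_right ..
        refine ⟨hyu, by linarith [hcast e0], by linarith [hcast e0],
          n + l e0, Lstep ends l S hy n hn, by push_cast; linarith⟩
  rw [Npts_eq_pts, Npts_eq_pts, himg]
  apply Set.ncard_image_of_injOn
  rintro ⟨e1, x1, s1⟩ hp1 ⟨e2, x2, s2⟩ hp2 heq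
  rw [mem_pts'] at hp1 hp2
  obtain ⟨a1, b1, c1, -⟩ := hp1
  obtain ⟨a2, b2, c2, -⟩ := hp2
  by_cases d1 : s1 + 1 < (l e1 : ℝ) <;> by_cases d2 : s2 + 1 < (l e2 : ℝ)
  · rw [slide_eq_pos ends l d1, slide_eq_pos ends l d2] at heq
    simp only [Prod.mk.injEq] at heq
    obtain ⟨he, hx, hs⟩ := heq
    simp only [Prod.mk.injEq]
    exact ⟨he, hx, by linarith⟩
  · rw [slide_eq_pos ends l d1, slide_eq_neg ends l d2] at heq
    simp only [Prod.mk.injEq] at heq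
    obtain ⟨he, hx, hs⟩ := heq
    exfalso
    push_neg at d2
    rw [he] at d1
    linarith
  · rw [slide_eq_neg ends l d1, slide_eq_pos ends l d2] at heq
    simp only [Prod.mk.injEq] at heq
    obtain ⟨he, hx, hs⟩ := heq
    exfalso
    push_neg at d1
    rw [he] at d1
    linarith
  · rw [slide_eq_neg ends l d1, slide_eq_neg ends l d2] at heq
    simp only [Prod.mk.injEq] at heq
    obtain ⟨he, hx, hs⟩ := heq
    have hll : (l e1 : ℝ) = l e2 := by rw [he]
    have hs12 : s1 = s2 := by linarith
    simp only [Prod.mk.injEq]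
    refine ⟨he, ?_, hs12⟩
    obtain ⟨y1, hy1⟩ := Sym2.mem_iff_exists.mp a1
    obtain ⟨y2, hy2⟩ := Sym2.mem_iff_exists.mp a2
    rw [otherV_spec ends hy1, otherV_spec ends hy2] at hx
    have h12 : s(x1, y1) = s(x2, y2) := by rw [← hy1, ← hy2, he]
    rcases Sym2.eq_iff.mp h12 with ⟨h, -⟩ | ⟨h, h'⟩
    · exact h
    · exact absurd (by rw [hy2]; exact Sym2.mk_isDiag_iff.mpr (h'.symm.trans hx))
        (hnd e2)

end DP12
namespace DP12

variable {E V : Type} (ends : E → Sym2 V) (l : E → ℕ) (S : Set V)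

theorem exists_stabBound [Fintype E] (hDP : IsDPSystem ends S) (hl : ∀ e, 0 < l e) :
    ∃ T : ℕ, IsStabBound ends (fun e => (l e : ℝ)) S (T : ℝ) := by
  obtain ⟨hfin, hnd, hconn, hSne⟩ := hDP
  rcases isEmpty_or_nonempty E with hE | hE
  · refine ⟨0, by norm_num, fun t ht => ?_⟩
    have hz : ∀ u : ℝ, Npts ends (fun e => (l e : ℝ)) S u = 0 := by
      intro u
      unfold Npts
      have : {p : E × V × ℝ | IsPoint ends (fun e => (l e : ℝ)) S u p.1 p.2.1 p.2.2}
          = ∅ := Set.eq_empty_of_isEmpty _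
      rw [this, Set.ncard_empty]
    rw [hz, hz]
  · obtain ⟨N, hshift⟩ := shift_lemma ends l S hl hconn hfin hE
    set T₀ : ℕ := N + Finset.univ.sup l with hT₀
    refine ⟨T₀, by positivity, fun t ht => ?_⟩
    -- constancy on [T₀, ∞)
    have hconst : ∀ k : ℕ, ∀ u : ℝ, (T₀ : ℝ) ≤ u → u < (T₀ : ℝ) + k + 1 →
        Npts ends (fun e => (l e : ℝ)) S u = Npts ends (fun e => (l e : ℝ)) S T₀ := by
      intro k
      induction k with
      | zero =>
        intro u h1 h2
        push_cast at h2
        apply npts_floor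
        have hu : ⌊u⌋ = (T₀ : ℤ) := by
          rw [Int.floor_eq_iff]
          push_cast
          constructor <;> [exact h1; linarith]
        rw [hu, Int.floor_natCast]
      | succ k ih =>
        intro u h1 h2
        by_cases hcase : u < (T₀ : ℝ) + k + 1
        · exact ih u h1 hcase
        · push_neg at hcase
          have h3 : (T₀ : ℝ) ≤ u - 1 := by push_cast at hcase ⊢; linarith
          have h4 : Npts ends (fun e => (l e : ℝ)) S ((u - 1) + 1)
              = Npts ends (fun e => (l e : ℝ)) S (u - 1) :=
            npts_succ ends l S hl hnd N hshift (u - 1) (by exact_mod_cast h3)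
          have h5 : u - 1 + 1 = u := by ring
          rw [h5] at h4
          rw [h4]
          exact ih (u - 1) h3 (by push_cast at h2 ⊢; linarith)
    obtain ⟨k, hk⟩ := exists_nat_gt (t - T₀)
    exact hconst k t ht (by push_cast at hk ⊢; linarith)

theorem floor_stabBound {T : ℝ} (hT : IsStabBound ends (fun e => (l e : ℝ)) S T) :
    IsStabBound ends (fun e => (l e : ℝ)) S (⌊T⌋ : ℝ) := by
  obtain ⟨hT0, hT⟩ := hT
  have hf0 : (0 : ℝ) ≤ (⌊T⌋ : ℝ) := by
    have : (0 : ℤ) ≤ ⌊T⌋ := Int.le_floor.mpr (by exact_mod_cast hT0)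
    exact_mod_cast this
  have hfT : Npts ends (fun e => (l e : ℝ)) S T
      = Npts ends (fun e => (l e : ℝ)) S (⌊T⌋ : ℝ) := by
    apply npts_floor
    rw [Int.floor_intCast]
  refine ⟨hf0, fun t ht => ?_⟩
  by_cases hcase : T ≤ t
  · rw [hT t hcase, hfT]
  · push_neg at hcase
    rw [← hfT]
    have h1 : ⌊t⌋ = ⌊T⌋ := by
      have h2 : ⌊T⌋ ≤ ⌊t⌋ := by
        rw [← Int.floor_intCast (R := ℝ) ⌊T⌋]
        exact Int.floor_le_floor ht
      have h3 : ⌊t⌋ ≤ ⌊T⌋ := Int.floor_le_floor hcase.le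
      omega
    have := npts_floor ends l S (t := T) (t' := t) h1.symm
    rw [this, hfT]

theorem exists_least_stab (hex : ∃ T : ℕ, IsStabBound ends (fun e => (l e : ℝ)) S (T : ℝ)) :
    ∃ T : ℝ, IsLeast {T' : ℝ | IsStabBound ends (fun e => (l e : ℝ)) S T'} T := by
  classical
  have hfind := Nat.find_spec hex
  refine ⟨(Nat.find hex : ℝ), hfind, ?_⟩
  intro T' hT'
  have hT'0 : 0 ≤ T' := hT'.1
  set m : ℕ := ⌊T'⌋.toNat with hm
  have hfl0 : (0 : ℤ) ≤ ⌊T'⌋ := Int.le_floor.mpr (by exact_mod_cast hT'0)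
  have hmT' : (⌊T'⌋ : ℝ) = (m : ℝ) := by
    rw [hm]
    exact_mod_cast congrArg (Int.cast : ℤ → ℝ) (Int.toNat_of_nonneg hfl0).symm
  have hPm : IsStabBound ends (fun e => (l e : ℝ)) S (m : ℝ) := by
    have := floor_stabBound ends l S hT'
    rwa [hmT'] at this
  have hle : Nat.find hex ≤ m := Nat.find_le hPm
  have h1 : ((Nat.find hex : ℕ) : ℝ) ≤ (m : ℝ) := by exact_mod_cast hle
  have h2 : (m : ℝ) ≤ T' := by
    rw [← hmT']
    exact Int.floor_le T'
  linarith

end DP12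
namespace DP12

variable {E V V' : Type} (ends : E → Sym2 V) (l : E → ℕ) (S : Set V) (φ : V ≃ V')

theorem map_symm_ends (e : E) :
    Sym2.map φ.symm (Sym2.map φ (ends e)) = ends e := by
  rw [Sym2.map_map]
  have : (φ.symm ∘ φ) = id := by ext v; simp
  rw [this, Sym2.map_id, id_eq]

theorem Lset_equiv (x : V) (n : ℕ) :
    n ∈ Lset (fun e => Sym2.map φ (ends e)) l (φ '' S) (φ x) ↔
      n ∈ Lset ends l S x := by
  constructor
  · rintro ⟨v₀', ⟨v₀, hv₀, rfl⟩, w, hw⟩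
    have hf : ∀ e, Sym2.map φ.symm (Sym2.map φ (ends e)) = ends e :=
      map_symm_ends ends φ
    obtain ⟨a, b, w', ha, hb, hlen⟩ :
        ∃ (a b : V) (w' : MGWalk ends a b), a = v₀ ∧ b = x ∧ lengthN l w' = n :=
      ⟨_, _, mapEnds φ.symm hf w, by simp, by simp,
        by rw [lengthN_mapEnds]; exact hw⟩
    subst ha; subst hb
    exact ⟨_, hv₀, w', hlen⟩
  · rintro ⟨v₀, hv₀, w, hw⟩
    refine ⟨φ v₀, ⟨v₀, hv₀, rfl⟩, mapEnds φ (fun _ => rfl) w, ?_⟩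
    rw [lengthN_mapEnds]
    exact hw

theorem npts_equiv (t : ℝ) :
    Npts (fun e => Sym2.map φ (ends e)) (fun e => (l e : ℝ)) (φ '' S) t =
      Npts ends (fun e => (l e : ℝ)) S t := by
  have himg : pts (fun e => Sym2.map φ (ends e)) l (φ '' S) t =
      (fun p : E × V × ℝ => (p.1, φ p.2.1, p.2.2)) '' pts ends l S t := by
    ext ⟨e, x', s⟩
    simp only [Set.mem_image]
    constructor
    · intro hq
      rw [mem_pts'] at hq
      obtain ⟨h1, h2, h3, n, hn, hns⟩ := hq
      obtain ⟨x, hx, rfl⟩ := Sym2.mem_map.mp h1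
      refine ⟨(e, x, s), ?_, rfl⟩
      rw [mem_pts']
      exact ⟨hx, h2, h3, n, (Lset_equiv ends l S φ x n).mp hn, hns⟩
    · rintro ⟨⟨e0, x, s0⟩, hp, heq⟩
      rw [mem_pts'] at hp
      obtain ⟨h1, h2, h3, n, hn, hns⟩ := hp
      simp only [Prod.mk.injEq] at heq
      obtain ⟨he, hx, hs⟩ := heq
      subst he; subst hs
      rw [mem_pts']
      rw [← hx]
      exact ⟨Sym2.mem_map.mpr ⟨x, h1, rfl⟩, h2, h3, n,
        (Lset_equiv ends l S φ x n).mpr hn, hns⟩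
  rw [Npts_eq_pts, Npts_eq_pts, himg]
  apply Set.ncard_image_of_injective
  rintro ⟨e1, x1, s1⟩ ⟨e2, x2, s2⟩ h
  simp only [Prod.mk.injEq] at h
  obtain ⟨he, hx, hs⟩ := h
  exact Prod.ext he (Prod.ext (φ.injective hx) hs)

theorem stabTime_equiv :
    stabTime (fun e => Sym2.map φ (ends e)) (fun e => (l e : ℝ)) (φ '' S) =
      stabTime ends (fun e => (l e : ℝ)) S := by
  unfold stabTime
  congr 1
  ext T
  simp only [Set.mem_setOf_eq]
  unfold IsStabBound
  constructor
  · rintro ⟨h0, h⟩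
    refine ⟨h0, fun t ht => ?_⟩
    have := h t ht
    rwa [npts_equiv ends l S φ, npts_equiv ends l S φ] at this
  · rintro ⟨h0, h⟩
    refine ⟨h0, fun t ht => ?_⟩
    rw [npts_equiv ends l S φ, npts_equiv ends l S φ]
    exact h t ht

theorem isDP_equiv (h : IsDPSystem ends S) :
    IsDPSystem (fun e => Sym2.map φ (ends e)) (φ '' S) := by
  obtain ⟨hfin, hnd, hconn, hSne⟩ := h
  refine ⟨Finite.of_equiv V φ, ?_, ?_, hSne.image φ⟩
  · intro e hdiag
    apply hnd e
    obtain ⟨b, hab⟩ := Sym2.mem_iff_exists.mp (Sym2.out_fst_mem (ends e))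
    have hdiag' : (Sym2.map φ (ends e)).IsDiag := hdiag
    rw [hab, Sym2.map_pair_eq, Sym2.mk_isDiag_iff] at hdiag'
    rw [hab]
    exact Sym2.mk_isDiag_iff.mpr (φ.injective hdiag')
  · intro a' b'
    obtain ⟨w⟩ := hconn (φ.symm a') (φ.symm b')
    obtain ⟨a, b, w', ha, hb⟩ :
        ∃ (a b : V') (w' : MGWalk (fun e => Sym2.map φ (ends e)) a b),
          a = a' ∧ b = b' :=
      ⟨_, _, mapEnds (ends' := fun e => Sym2.map φ (ends e)) φ (fun _ => rfl) w,
        by simp, by simp⟩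
    subst ha; subst hb
    exact ⟨w'⟩

theorem vcard_le [Fintype E] [Fintype V]
    (hnd : ∀ e : E, ¬ (ends e).IsDiag) (hconn : ∀ a b : V, Nonempty (MGWalk ends a b))
    (hV : Nonempty V) :
    Fintype.card V ≤ 2 * Fintype.card E + 1 := by
  classical
  rcases isEmpty_or_nonempty E with hE | hE
  · have hsub : Subsingleton V := by
      constructor
      intro a b
      obtain ⟨w⟩ := hconn a b
      cases w with
      | nil _ => rfl
      | cons e _ _ => exact isEmptyElim e
    have := Fintype.card_le_one_iff_subsingleton.mpr hsub
    omega
  · obtain ⟨e₀⟩ := hE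
    have hinc : ∀ v : V, ∃ e : E, v ∈ ends e := by
      intro v
      obtain ⟨w⟩ := hconn v (ends e₀).out.1
      cases w with
      | nil _ => exact ⟨e₀, Sym2.out_fst_mem _⟩
      | cons e h _ => exact ⟨e, by rw [h]; exact Sym2.mem_mk_left ..⟩
    choose ev hev using hinc
    have hpair : ∀ e : E, ∃ a b : V, ends e = s(a, b) := by
      intro e
      obtain ⟨b, hb⟩ := Sym2.mem_iff_exists.mp (Sym2.out_fst_mem (ends e))
      exact ⟨_, b, hb⟩
    choose pa pb hpab using hpair
    have hinj : Function.Injective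
        (fun v : V => ((ev v, decide (v = pa (ev v))) : E × Bool)) := by
      intro u v h
      simp only [Prod.mk.injEq] at h
      obtain ⟨he, hb⟩ := h
      have hu : u = pa (ev u) ∨ u = pb (ev u) := by
        have h2 := hev u
        rw [hpab (ev u), Sym2.mem_iff] at h2
        exact h2
      have hv : v = pa (ev v) ∨ v = pb (ev v) := by
        have h2 := hev v
        rw [hpab (ev v), Sym2.mem_iff] at h2
        exact h2
      by_cases hd : u = pa (ev u)
      · have hbv : decide (v = pa (ev v)) = true := by rw [← hb]; exact decide_eq_true hd
        have hdv : v = pa (ev v) := of_decide_eq_true hbv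
        rw [hd, hdv, he]
      · have hbv : decide (v = pa (ev v)) = false := by
          rw [← hb]; exact decide_eq_false hd
        have hdv : ¬ v = pa (ev v) := of_decide_eq_false hbv
        have hu2 : u = pb (ev u) := hu.resolve_left hd
        have hv2 : v = pb (ev v) := hv.resolve_left hdv
        rw [hu2, hv2, he]
    have := Fintype.card_le_of_injective _ hinj
    rw [Fintype.card_prod, Fintype.card_bool] at this
    omega

end DP12
namespace DP12

variable {E : Type}

theorem trivial_system [Fintype E] :
    ∃ (V : Type) (ends : E → Sym2 V) (S : Set V), IsDPSystem ends S := by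
  rcases isEmpty_or_nonempty E with hE | hE
  · refine ⟨PUnit, fun e => isEmptyElim e, Set.univ, ?_, fun e => isEmptyElim e,
      ?_, ⟨PUnit.unit, trivial⟩⟩
    · infer_instance
    · intro a b
      cases a; cases b; exact ⟨.nil _⟩
  · obtain ⟨e₀⟩ := hE
    refine ⟨Bool, fun _ => s(true, false), {true}, ?_, ?_, ?_, ⟨true, rfl⟩⟩
    · infer_instance
    · intro e
      rw [Sym2.mk_isDiag_iff]
      simp
    · intro a b
      match a, b with
      | true, true => exact ⟨.nil _⟩
      | false, false => exact ⟨.nil _⟩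
      | true, false => exact ⟨.cons e₀ rfl (.nil _)⟩
      | false, true => exact ⟨.cons e₀ Sym2.eq_swap (.nil _)⟩

theorem times_finite [Fintype E] (l : E → ℕ) :
    Set.Finite {x : ℝ | ∃ (V : Type) (ends : E → Sym2 V) (S : Set V),
      IsDPSystem ends S ∧ stabTime ends (fun e => (l e : ℝ)) S = x} := by
  classical
  set K := 2 * Fintype.card E + 2 with hK
  have hfin : Set.Finite (⋃ k ∈ Finset.range K,
      Set.range (fun q : (E → Sym2 (Fin k)) × Set (Fin k) =>
        stabTime q.1 (fun e => (l e : ℝ)) q.2)) := by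
    apply Set.Finite.biUnion (Finset.range K).finite_toSet
    intro k _
    apply Set.finite_range
  apply hfin.subset
  rintro x ⟨V, ends, S, hDP, rfl⟩
  haveI : Finite V := hDP.1
  haveI := Fintype.ofFinite V
  have φ := Fintype.equivFin V
  have hVne : Nonempty V := ⟨hDP.2.2.2.some⟩
  have hcard := vcard_le ends hDP.2.1 hDP.2.2.1 hVne
  have hk : Fintype.card V < K := by omega
  simp only [Set.mem_iUnion]
  refine ⟨Fintype.card V, Finset.mem_range.mpr hk,
    ⟨(fun e => Sym2.map φ (ends e), φ '' S), stabTime_equiv ends l S φ⟩⟩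

end DP12


/-- with positive integer edge lengths, every DP-system assembled
from `E` has a (finite, attained) least stabilization bound, the set of
stabilization times of all DP-systems assembled from `E` is finite, and there is
a DP-system attaining the maximal stabilization time, i.e. `LSTDP(E)` is
nonempty. -/
theorem stmt12 {E : Type} [Fintype E] (l : E → ℕ) (hl : ∀ e, 0 < l e) :
    (∀ (V : Type) (ends : E → Sym2 V) (S : Set V), IsDPSystem ends S →
      ∃ T : ℝ, IsLeast {T' : ℝ | IsStabBound ends (fun e => (l e : ℝ)) S T'} T) ∧
    (Set.Finite {x : ℝ | ∃ (V : Type) (ends : E → Sym2 V) (S : Set V),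
      IsDPSystem ends S ∧ stabTime ends (fun e => (l e : ℝ)) S = x}) ∧
    (∃ (V : Type) (ends : E → Sym2 V) (S : Set V),
      IsDPSystem ends S ∧ IsMaxStab (fun e => (l e : ℝ)) ends S) := by
  have part2 := DP12.times_finite l
  refine ⟨?_, part2, ?_⟩
  · intro V ends S hDP
    exact DP12.exists_least_stab ends l S (DP12.exists_stabBound ends l S hDP hl)
  · have hne : {x : ℝ | ∃ (V : Type) (ends : E → Sym2 V) (S : Set V),
        IsDPSystem ends S ∧ stabTime ends (fun e => (l e : ℝ)) S = x}.Nonempty := by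
      obtain ⟨V, ends, S, hDP⟩ := DP12.trivial_system (E := E)
      exact ⟨_, V, ends, S, hDP, rfl⟩
    obtain ⟨x, hx, hmax⟩ := Set.Finite.exists_maximalFor id _ part2 hne
    obtain ⟨V, ends, S, hDP, hstab⟩ := hx
    refine ⟨V, ends, S, hDP, ?_⟩
    intro V' ends' S' hDP'
    have h' : stabTime ends' (fun e => (l e : ℝ)) S' ∈ {x : ℝ |
        ∃ (V : Type) (ends : E → Sym2 V) (S : Set V),
          IsDPSystem ends S ∧ stabTime ends (fun e => (l e : ℝ)) S = x} :=
      ⟨V', ends', S', hDP', rfl⟩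
    rw [hstab]
    by_contra hlt
    push_neg at hlt
    have := hmax h' (le_of_lt hlt)
    simp only [id_eq] at this
    exact absurd this (not_le.mpr hlt)
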